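/- Every strongly connected digraph G on n ≥ 2 vertices with δ⁺(G) + δ⁻(G) ≥ n contains a Hamilton cycle. In particular, every digraph on n ≥ 2 vertices with minimum semidegree δ⁰(G) ≥ n/2 contains a Hamilton cycle. -/

import Mathlib

/-- The outdegree of a vertex `x` in the digraph with adjacency relation `G`. -/
noncomputable def outDeg {V : Type*} (G : V → V → Prop) (x : V) : ℕ :=
  Nat.card {y : V // G x y}

/-- The indegree of a vertex `x` in the digraph with adjacency relation `G`. -/
noncomputable def inDeg {V : Type*} (G : V → V → Prop) (x : V) : ℕ :=
  Nat.card {y : V // G y x}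

/-- A digraph is strongly connected if there is a directed path between any two vertices. -/
def StronglyConnected {V : Type*} (G : V → V → Prop) : Prop :=
  ∀ x y : V, Relation.ReflTransGen G x y

/-- `f` is a Hamilton cycle of the digraph `G`. -/
def IsHamCycle {V : Type*} [Fintype V] (G : V → V → Prop)
    (f : ZMod (Fintype.card V) → V) : Prop :=
  Function.Bijective f ∧ ∀ i, G (f i) (f (i + 1))

open Finset
open scoped Classical

set_option linter.unusedSectionVars false

section Cov

variable {l : ℕ} [NeZero l]

lemma closed_sub_one_eq_univ (Y : Finset (ZMod l)) (hne : Y.Nonempty)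
    (hcl : ∀ y ∈ Y, y - 1 ∈ Y) : Y = univ := by
  obtain ⟨y₀, hy₀⟩ := hne
  have key : ∀ m : ℕ, y₀ - (m : ZMod l) ∈ Y := by
    intro m
    induction m with
    | zero => simpa using hy₀
    | succ k ih =>
        have := hcl _ ih
        have he : y₀ - ((k+1 : ℕ) : ZMod l) = y₀ - (k : ℕ) - 1 := by push_cast; ring
        rwa [he]
  apply Finset.eq_univ_of_forall
  intro z
  have := key ((y₀ - z).val)
  rwa [ZMod.natCast_val, ZMod.cast_id, sub_sub_cancel] at this

lemma grow (Y : Finset (ZMod l)) (hne : Y.Nonempty) (hY : Y ≠ univ) :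
    Y.card + 1 ≤ (Y ∪ Y.image (· - 1)).card := by
  have hex : ∃ y ∈ Y, y - 1 ∉ Y := by
    by_contra h
    push_neg at h
    exact hY (closed_sub_one_eq_univ Y hne h)
  obtain ⟨y, hy, hy'⟩ := hex
  have hsub : insert (y - 1) Y ⊆ Y ∪ Y.image (· - 1) := by
    intro z hz
    rcases Finset.mem_insert.mp hz with rfl | hz
    · exact Finset.mem_union_right _ (Finset.mem_image.mpr ⟨y, hy, rfl⟩)
    · exact Finset.mem_union_left _ hz
  calc Y.card + 1 = (insert (y - 1) Y).card := (Finset.card_insert_of_notMem hy').symm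
    _ ≤ _ := Finset.card_le_card hsub

/-- `Ucov B t` is `(B-1) ∪ (B-2) ∪ ... ∪ (B-(t+1))`. -/
def Ucov (B : Finset (ZMod l)) : ℕ → Finset (ZMod l)
  | 0 => B.image (· - 1)
  | t + 1 => Ucov B t ∪ (Ucov B t).image (· - 1)

lemma mem_Ucov {B : Finset (ZMod l)} {x : ZMod l} :
    ∀ {t : ℕ}, x ∈ Ucov B t ↔ ∃ s : ℕ, 1 ≤ s ∧ s ≤ t + 1 ∧ x + (s : ZMod l) ∈ B := by
  intro t
  induction t generalizing x with
  | zero =>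
      simp only [Ucov, Finset.mem_image]
      constructor
      · rintro ⟨b, hb, rfl⟩
        exact ⟨1, le_refl 1, le_refl 1, by simpa using hb⟩
      · rintro ⟨s, hs1, hs2, hb⟩
        have : s = 1 := le_antisymm hs2 hs1
        subst this
        exact ⟨x + 1, by simpa using hb, by ring⟩
  | succ t ih =>
      simp only [Ucov, Finset.mem_union, Finset.mem_image]
      constructor
      · rintro (hx | ⟨y, hy, rfl⟩)
        · obtain ⟨s, hs1, hs2, hb⟩ := ih.mp hx
          exact ⟨s, hs1, by omega, hb⟩
        · obtain ⟨s, hs1, hs2, hb⟩ := ih.mp hy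
          refine ⟨s + 1, by omega, by omega, ?_⟩
          have : y - 1 + ((s+1 : ℕ) : ZMod l) = y + (s : ZMod l) := by push_cast; ring
          rwa [this]
      · rintro ⟨s, hs1, hs2, hb⟩
        by_cases hst : s ≤ t + 1
        · exact Or.inl (ih.mpr ⟨s, hs1, hst, hb⟩)
        · have hse : s = t + 2 := by omega
          subst hse
          refine Or.inr ⟨x + 1, ih.mpr ⟨t + 1, by omega, le_refl _, ?_⟩, by ring⟩
          have : x + 1 + ((t+1 : ℕ) : ZMod l) = x + ((t+2 : ℕ) : ZMod l) := by push_cast; ring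
          rwa [this]

lemma Ucov_nonempty {B : Finset (ZMod l)} (hB : B.Nonempty) (t : ℕ) :
    (Ucov B t).Nonempty := by
  obtain ⟨b, hb⟩ := hB
  exact ⟨b - 1, mem_Ucov.mpr ⟨1, le_refl 1, by omega, by simpa using hb⟩⟩

lemma Ucov_mono {B : Finset (ZMod l)} {s t : ℕ} (h : s ≤ t) : Ucov B s ⊆ Ucov B t := by
  intro x hx
  obtain ⟨u, h1, h2, hb⟩ := mem_Ucov.mp hx
  exact mem_Ucov.mpr ⟨u, h1, by omega, hb⟩

lemma Ucov_card {B : Finset (ZMod l)} (hB : B.Nonempty) :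
    ∀ t : ℕ, Ucov B t ≠ univ → B.card + t ≤ (Ucov B t).card := by
  intro t
  induction t with
  | zero =>
      intro _
      have : (B.image (· - 1)).card = B.card :=
        Finset.card_image_of_injective _ (sub_left_injective)
      simp [Ucov, this]
  | succ t ih =>
      intro huniv
      have ht : Ucov B t ≠ univ := by
        intro h
        apply huniv
        apply Finset.eq_univ_of_forall
        intro x
        exact Ucov_mono (Nat.le_succ t) (h ▸ Finset.mem_univ x)
      have h1 := ih ht
      have h2 := grow (Ucov B t) (Ucov_nonempty hB t) ht
      calc B.card + (t + 1) ≤ (Ucov B t).card + 1 := by omega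
    _ ≤ _ := h2

lemma cover {k : ℕ} (A B : Finset (ZMod l)) (hA : A.Nonempty) (hB : B.Nonempty)
    (hk : 1 ≤ k) (hd : ∀ t : ℕ, 1 ≤ t → t ≤ k → ∀ b ∈ B, b - (t : ZMod l) ∉ A) :
    A.card + B.card + k ≤ l + 1 := by
  set U := Ucov B (k - 1) with hU
  have hdisj : ∀ x ∈ A, x ∉ U := by
    intro x hxA hxU
    obtain ⟨s, hs1, hs2, hb⟩ := mem_Ucov.mp hxU
    have hsk : s ≤ k := by omega
    have := hd s hs1 hsk (x + (s : ZMod l)) hb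
    apply this
    simpa using hxA
  have hUniv : U ≠ univ := by
    intro h
    obtain ⟨a, ha⟩ := hA
    exact hdisj a ha (h ▸ Finset.mem_univ a)
  have hcard : B.card + (k - 1) ≤ U.card := Ucov_card hB (k-1) hUniv
  have hdj : Disjoint A U := Finset.disjoint_left.mpr hdisj
  have : A.card + U.card ≤ l := by
    rw [← Finset.card_union_of_disjoint hdj]
    calc (A ∪ U).card ≤ Fintype.card (ZMod l) := Finset.card_le_univ _
      _ = l := ZMod.card l
  omega


end Cov

section Helpers

variable {V : Type*} [Fintype V]

/-- A directed cycle, as a nonempty list of distinct vertices with consecutive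
vertices adjacent and the last adjacent to the first. -/
def IsCycleL (G : V → V → Prop) (xs : List V) : Prop :=
  ∃ h : xs ≠ [], xs.Nodup ∧ xs.IsChain G ∧ G (xs.getLast h) (xs.head h)

lemma outDeg_eq_card (G : V → V → Prop) (x : V) :
    outDeg G x = (univ.filter fun y => G x y).card := by
  rw [outDeg, Nat.card_eq_fintype_card, Fintype.card_subtype]

lemma inDeg_eq_card (G : V → V → Prop) (x : V) :
    inDeg G x = (univ.filter fun y => G y x).card := by
  rw [inDeg, Nat.card_eq_fintype_card, Fintype.card_subtype]

lemma exists_maximal_list (P : List V → Prop) (hne : ∃ xs, P xs)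
    (hnd : ∀ xs, P xs → xs.Nodup) :
    ∃ xs, P xs ∧ ∀ ys, P ys → ys.length ≤ xs.length := by
  set S : Set ℕ := {m | ∃ xs, P xs ∧ xs.length = m} with hS
  have hSne : S.Nonempty := ⟨hne.choose.length, hne.choose, hne.choose_spec, rfl⟩
  have hbdd : BddAbove S := by
    refine ⟨Fintype.card V, ?_⟩
    rintro m ⟨xs, hxs, rfl⟩
    exact (hnd xs hxs).length_le_card
  obtain ⟨xs, hxs, hlen⟩ := Nat.sSup_mem hSne hbdd
  exact ⟨xs, hxs, fun ys hys => hlen ▸ le_csSup hbdd ⟨ys, hys, rfl⟩⟩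

lemma isCycleL_reverse {G : V → V → Prop} {xs : List V} (h : IsCycleL (flip G) xs) :
    IsCycleL G xs.reverse := by
  obtain ⟨hne, hnd, hch, hwrap⟩ := h
  have hne' : xs.reverse ≠ [] := by simpa using hne
  refine ⟨hne', List.nodup_reverse.mpr hnd, ?_, ?_⟩
  · exact List.isChain_reverse.mpr hch
  · rw [List.getLast_reverse, List.head_reverse]
    exact hwrap

lemma surgery {G : V → V → Prop} {l : ℕ} [NeZero l] (c : ZMod l → V)
    (hcinj : Function.Injective c) (hcadj : ∀ i, G (c i) (c (i + 1)))
    {Q : List V} (hQne : Q ≠ []) (hQnd : Q.Nodup) (hQch : Q.IsChain G)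
    (hdisj : ∀ i, c i ∉ Q) {a b : ZMod l} {t : ℕ} (hts : (t : ZMod l) = b - a)
    (ht1 : 1 ≤ t) (htk : t ≤ Q.length) (htl : t < l)
    (ha : G (c a) (Q.head hQne)) (hb : G (Q.getLast hQne) (c b)) :
    ∃ ys, IsCycleL G ys ∧ l + 1 ≤ ys.length := by
  set P : List V := (List.range (l - t + 1)).map (fun s : ℕ => c (b + ((s : ℕ) : ZMod l)))
    with hP
  have hPlen : P.length = l - t + 1 := by simp [hP]
  have hPne : P ≠ [] := by
    apply List.ne_nil_of_length_pos
    omega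
  have hPget : ∀ (j : ℕ) (h : j < P.length), P[j] = c (b + ((j : ℕ) : ZMod l)) := by
    intro j h
    have hj : j < l - t + 1 := by omega
    simp [hP]
  have hcastl : ((l - t : ℕ) : ZMod l) = 0 - (t : ZMod l) := by
    rw [Nat.cast_sub (le_of_lt htl)]
    simp
  have hlastP : P.getLast hPne = c a := by
    rw [List.getLast_eq_getElem, hPget _ (by omega)]
    congr 1
    have h1 : P.length - 1 = l - t := by omega
    rw [h1, hcastl, hts]
    ring
  have hheadP : P.head hPne = c b := by
    rw [List.head_eq_getElem, hPget 0 (by omega)]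
    norm_num
  have hPnd : P.Nodup := by
    rw [hP]
    apply List.Nodup.map_on _ List.nodup_range
    intro s1 hs1 s2 hs2 heq
    rw [List.mem_range] at hs1 hs2
    have h1 : ((s1 : ℕ) : ZMod l) = ((s2 : ℕ) : ZMod l) := add_left_cancel (hcinj heq)
    have v1 : ((s1 : ℕ) : ZMod l).val = s1 := ZMod.val_cast_of_lt (by omega)
    have v2 : ((s2 : ℕ) : ZMod l).val = s2 := ZMod.val_cast_of_lt (by omega)
    rw [← v1, ← v2, h1]
  have hPch : P.IsChain G := by
    rw [List.isChain_iff_getElem]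
    intro j hj
    rw [hPget j (by omega), hPget (j+1) (by omega)]
    have : (((j : ℕ) + 1 : ℕ) : ZMod l) = ((j : ℕ) : ZMod l) + 1 := by push_cast; ring
    rw [this, ← add_assoc]
    exact hcadj _
  refine ⟨Q ++ P, ⟨by simp [hQne], ?_, ?_, ?_⟩, ?_⟩
  · rw [List.nodup_append]
    refine ⟨hQnd, hPnd, ?_⟩
    intro v hvQ w hvP hvw
    subst hvw
    obtain ⟨s, _, rfl⟩ := List.mem_map.mp (hP ▸ hvP)
    exact hdisj _ hvQ
  · rw [List.isChain_append]
    refine ⟨hQch, hPch, ?_⟩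
    intro u hu w hw
    rw [List.getLast?_eq_getLast hQne] at hu
    rw [List.head?_eq_head hPne] at hw
    simp only [Option.mem_def, Option.some_inj] at hu hw
    subst hu; subst hw
    rw [hheadP]
    exact hb
  · have h1 : (Q ++ P).getLast (by simp [hQne]) = P.getLast hPne := List.getLast_append_of_ne_nil _ hPne
    have h2 : (Q ++ P).head (by simp [hQne]) = Q.head hQne := List.head_append_of_ne_nil _
    rw [h1, h2, hlastP]
    exact ha
  · rw [List.length_append, hPlen]
    omega

lemma exists_long_cycle [Nonempty V] (hirr : Irreflexive G) (d : ℕ) (hd : 1 ≤ d)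
    (hdeg : ∀ v : V, d ≤ (univ.filter fun y => G v y).card) :
    ∃ xs, IsCycleL G xs ∧ d + 1 ≤ xs.length := by
  obtain ⟨xs, ⟨hne, hnd, hch⟩, hmax⟩ :=
    exists_maximal_list (fun xs => xs ≠ [] ∧ xs.Nodup ∧ xs.IsChain G)
      ⟨[Classical.arbitrary V], by simp⟩ (fun xs h => h.2.1)
  set x := xs.getLast hne with hx
  have hout : ∀ w, G x w → w ∈ xs := by
    intro w hw
    by_contra hwmem
    have hP : (xs ++ [w]) ≠ [] ∧ (xs ++ [w]).Nodup ∧ (xs ++ [w]).IsChain G := by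
      refine ⟨by simp, ?_, ?_⟩
      · simp [List.nodup_append, hnd, hwmem]
        rintro a ha rfl
        exact hwmem ha
      · rw [List.isChain_append]
        refine ⟨hch, by simp, ?_⟩
        intro a ha b hb
        simp only [List.head?_cons, Option.mem_def, Option.some_inj] at hb
        rw [List.getLast?_eq_getLast hne] at ha
        simp only [Option.mem_def, Option.some_inj] at ha
        subst ha; subst hb
        exact hw
    have := hmax _ hP
    simp at this
  -- the set of out-neighbours of x
  set S : Finset V := univ.filter (fun w => G x w) with hSdef
  have hScard : d ≤ S.card := hdeg x
  have hSne : S.Nonempty := Finset.card_pos.mp (by omega)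
  have hSmem : ∀ w ∈ S, G x w := by intro w hw; simpa [hSdef] using hw
  have hSidx : ∀ w ∈ S, xs.idxOf w < xs.length := by
    intro w hw
    exact List.idxOf_lt_length_iff.mpr (hout w (hSmem w hw))
  -- choose the S-element with minimal index
  have hJne : (S.image (fun w => xs.idxOf w)).Nonempty := hSne.image _
  obtain ⟨w₀, hw₀S, hw₀i⟩ :=
    Finset.mem_image.mp ((S.image (fun w => xs.idxOf w)).min'_mem hJne)
  have hmin0 : ∀ w ∈ S, xs.idxOf w₀ ≤ xs.idxOf w := by
    intro w hw
    rw [hw₀i]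
    exact Finset.min'_le _ _ (Finset.mem_image.mpr ⟨w, hw, rfl⟩)
  have hi₀lt : xs.idxOf w₀ < xs.length := hSidx w₀ hw₀S
  have hysne : xs.drop (xs.idxOf w₀) ≠ [] := by
    apply List.ne_nil_of_length_pos
    rw [List.length_drop]
    omega
  have hhead : (xs.drop (xs.idxOf w₀)).head hysne = w₀ := by
    rw [List.head_drop]
    exact List.getElem_idxOf hi₀lt
  have hlast : (xs.drop (xs.idxOf w₀)).getLast hysne = x := by
    rw [List.getLast_drop]
  refine ⟨xs.drop (xs.idxOf w₀),
    ⟨hysne, (List.drop_sublist _ xs).nodup hnd, ?_, ?_⟩, ?_⟩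
  · exact hch.drop _
  · rw [hlast, hhead]
    exact hSmem w₀ hw₀S
  · -- length bound: all indices of S-elements are in [indexOf w₀, xs.length - 1)
    have hJsub : S.image (fun w => xs.idxOf w) ⊆ Finset.Ico (xs.idxOf w₀) (xs.length - 1) := by
      intro j hj
      obtain ⟨w, hwS, rfl⟩ := Finset.mem_image.mp hj
      have h1 : xs.idxOf w₀ ≤ xs.idxOf w := hmin0 w hwS
      have h2 : xs.idxOf w < xs.length := hSidx w hwS
      have h3 : xs.idxOf w ≠ xs.length - 1 := by
        intro h
        have hg : xs[xs.idxOf w] = w := List.getElem_idxOf h2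
        have hgl : xs.getLast hne = xs[xs.length - 1] := List.getLast_eq_getElem hne
        have hwx : w = x := by
          rw [← hg, hx, hgl]
          congr 1
        exact hirr x (hwx ▸ hSmem w hwS)
      refine Finset.mem_Ico.mpr ⟨h1, by omega⟩
    have hJcard : (S.image (fun w => xs.idxOf w)).card = S.card := by
      apply Finset.card_image_of_injOn
      intro w1 h1 w2 h2 heq
      simp only [Finset.mem_coe] at h1 h2
      have g1 : xs[xs.idxOf w1]'(hSidx w1 h1) = w1 := List.getElem_idxOf _
      have g2 : xs[xs.idxOf w2]'(hSidx w2 h2) = w2 := List.getElem_idxOf _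
      simp only at heq
      rw [← g1, ← g2]
      congr 1
    have := Finset.card_le_card hJsub
    rw [hJcard, Nat.card_Ico] at this
    rw [List.length_drop]
    omega


end Helpers

theorem core (V : Type) [Fintype V] (G : V → V → Prop) (hirr : Irreflexive G)
    (h2 : 2 ≤ Fintype.card V)
    (hdeg : Fintype.card V ≤ sInf (Set.range (outDeg G)) + sInf (Set.range (inDeg G))) :
    ∃ f : ZMod (Fintype.card V) → V, IsHamCycle G f := by
  haveI hVne : Nonempty V := Fintype.card_pos_iff.mp (by omega)
  set n := Fintype.card V with hn
  set p := sInf (Set.range (outDeg G)) with hp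
  set q := sInf (Set.range (inDeg G)) with hq
  have hple : ∀ v, p ≤ (univ.filter fun y => G v y).card := by
    intro v
    rw [← outDeg_eq_card]
    exact Nat.sInf_le ⟨v, rfl⟩
  have hqle : ∀ v, q ≤ (univ.filter fun y => G y v).card := by
    intro v
    rw [← inDeg_eq_card]
    exact Nat.sInf_le ⟨v, rfl⟩
  have hdegub : ∀ v, (univ.filter fun y => G v y).card ≤ n - 1 := by
    intro v
    have hsub : (univ.filter fun y => G v y) ⊆ univ.erase v := by
      intro y hy
      rw [Finset.mem_filter] at hy
      refine Finset.mem_erase.mpr ⟨?_, Finset.mem_univ y⟩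
      rintro rfl
      exact hirr _ hy.2
    calc (univ.filter fun y => G v y).card ≤ (univ.erase v).card := Finset.card_le_card hsub
      _ = n - 1 := by rw [Finset.card_erase_of_mem (Finset.mem_univ v), Finset.card_univ]
  have hdegub' : ∀ v, (univ.filter fun y => G y v).card ≤ n - 1 := by
    intro v
    have hsub : (univ.filter fun y => G y v) ⊆ univ.erase v := by
      intro y hy
      rw [Finset.mem_filter] at hy
      refine Finset.mem_erase.mpr ⟨?_, Finset.mem_univ y⟩
      rintro rfl
      exact hirr _ hy.2
    calc (univ.filter fun y => G y v).card ≤ (univ.erase v).card := Finset.card_le_card hsub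
      _ = n - 1 := by rw [Finset.card_erase_of_mem (Finset.mem_univ v), Finset.card_univ]
  have v₁ : V := Classical.arbitrary V
  have hpub : p ≤ n - 1 := le_trans (hple v₁) (hdegub v₁)
  have hqub : q ≤ n - 1 := le_trans (hqle v₁) (hdegub' v₁)
  have hp1 : 1 ≤ p := by omega
  have hq1 : 1 ≤ q := by omega
  -- a longest cycle
  obtain ⟨xs, hxscyc, hxmax⟩ := exists_maximal_list (IsCycleL G)
    (by
      obtain ⟨zs, hzs, _⟩ := exists_long_cycle hirr p hp1 hple
      exact ⟨zs, hzs⟩)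
    (fun ys hy => by obtain ⟨_, hnd, _⟩ := hy; exact hnd)
  obtain ⟨hne, hnd, hch, hwrap⟩ := hxscyc
  set l := xs.length with hl
  have hplt : p + 1 ≤ l := by
    obtain ⟨zs, hzs, hlen⟩ := exists_long_cycle hirr p hp1 hple
    exact le_trans hlen (hxmax zs hzs)
  have hqlt : q + 1 ≤ l := by
    have hflip : Irreflexive (flip G) := fun x h => hirr x h
    obtain ⟨zs, hzs, hlen⟩ := exists_long_cycle hflip q hq1 (fun v => hqle v)
    refine le_trans ?_ (hxmax zs.reverse (isCycleL_reverse hzs))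
    simpa using hlen
  have hl2 : 2 ≤ l := by omega
  haveI : NeZero l := ⟨by omega⟩
  have hlen_le : l ≤ n := by
    rw [hl, hn]
    exact hnd.length_le_card
  -- the cycle as a map from ZMod l
  have hvl : ∀ i : ZMod l, i.val < xs.length := fun i => ZMod.val_lt i
  set c : ZMod l → V := fun i => xs[i.val]'(hvl i) with hc
  have hcinj : Function.Injective c := by
    intro i j hij
    rw [hc] at hij
    simp only at hij
    have h2 : (fun (m : Fin xs.length) => xs[m]) ⟨i.val, hvl i⟩ =
        (fun (m : Fin xs.length) => xs[m]) ⟨j.val, hvl j⟩ := hij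
    have h3 := List.nodup_iff_injective_getElem.mp hnd h2
    have hval : i.val = j.val := by
      have := congrArg Fin.val h3
      simpa using this
    exact ZMod.val_injective l hval
  have hval1 : (1 : ZMod l).val = 1 := ZMod.val_one'' (by omega)
  have hcadj : ∀ i, G (c i) (c (i + 1)) := by
    intro i
    rw [hc]
    simp only
    by_cases hilt : i.val + 1 < l
    · have hv1 : (i + 1).val = i.val + 1 := by
        rw [ZMod.val_add, hval1]
        exact Nat.mod_eq_of_lt hilt
      have hgoal := List.isChain_iff_getElem.mp hch i.val (by
        rw [← hl]
        omega)
      simp only [hv1]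
      exact hgoal
    · have hieq : i.val = l - 1 := by
        have := ZMod.val_lt i
        omega
      have hv0 : (i + 1).val = 0 := by
        rw [ZMod.val_add, hval1, hieq]
        have : l - 1 + 1 = l := by omega
        rw [this, Nat.mod_self]
      have hlast : xs.getLast hne = xs[i.val]'(hvl i) := by
        rw [List.getLast_eq_getElem]
        congr 1
        rw [hieq]
      have hhead : xs.head hne = xs[(i + 1).val]'(hvl (i+1)) := by
        rw [List.head_eq_getElem]
        congr 1
        rw [hv0]
      rw [← hlast, ← hhead]
      exact hwrap
  have hcmem : ∀ i, c i ∈ xs := by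
    intro i
    rw [hc]
    simp only
    exact List.getElem_mem _
  have hsurj : ∀ v ∈ xs, ∃ i : ZMod l, c i = v := by
    intro v hv
    obtain ⟨j, hj, rfl⟩ := List.mem_iff_getElem.mp hv
    refine ⟨((j : ℕ) : ZMod l), ?_⟩
    rw [hc]
    simp only
    congr 1
    exact ZMod.val_cast_of_lt hj
  by_cases hln : l = n
  · -- the cycle is Hamiltonian
    show ∃ f : ZMod n → V, Function.Bijective f ∧ ∀ i, G (f i) (f (i + 1))
    rw [← hln]
    refine ⟨c, ?_, hcadj⟩
    rw [Fintype.bijective_iff_injective_and_card]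
    refine ⟨hcinj, ?_⟩
    rw [ZMod.card]
    exact hln
  · -- contradiction
    exfalso
    have hlltn : l < n := lt_of_le_of_ne hlen_le hln
    have hRex : ∃ v, v ∉ xs := by
      by_contra hcon
      push_neg at hcon
      have : (univ : Finset V) ⊆ xs.toFinset := fun v _ => List.mem_toFinset.mpr (hcon v)
      have := Finset.card_le_card this
      rw [Finset.card_univ, List.toFinset_card_of_nodup hnd] at this
      omega
    obtain ⟨v₀, hv₀⟩ := hRex
    -- a longest path outside the cycle
    obtain ⟨Q, ⟨⟨hQne, hQnd, hQch⟩, hQR⟩, hQmax⟩ := exists_maximal_list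
      (fun ys => (ys ≠ [] ∧ ys.Nodup ∧ ys.IsChain G) ∧ ∀ v ∈ ys, v ∉ xs)
      ⟨[v₀], ⟨by simp, by simp, by simp⟩, by simpa using hv₀⟩
      (fun ys hy => hy.1.2.1)
    set k := Q.length with hk
    have hk1 : 1 ≤ k := by
      rw [hk]
      exact List.length_pos_iff.mpr hQne
    have hdisjQ : ∀ i, c i ∉ Q := fun i hi => hQR _ hi (hcmem i)
    have hkl : k + l ≤ n := by
      have hnd2 : (Q ++ xs).Nodup := by
        rw [List.nodup_append]
        exact ⟨hQnd, hnd, fun a ha b hb hab => hQR a ha (hab ▸ hb)⟩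
      have := hnd2.length_le_card
      rw [List.length_append] at this
      omega
    set q1 := Q.head hQne with hq1def
    set qk := Q.getLast hQne with hqkdef
    have hq1Q : q1 ∈ Q := List.head_mem hQne
    have hqkQ : qk ∈ Q := List.getLast_mem hQne
    set A : Finset (ZMod l) := univ.filter (fun i => G (c i) q1) with hA
    set B : Finset (ZMod l) := univ.filter (fun i => G qk (c i)) with hB
    -- in-degree bound at q1
    have hAbound : q + 1 ≤ k + A.card := by
      have hsub : (univ.filter fun y => G y q1) ⊆ (Q.toFinset.erase q1) ∪ A.image c := by
        intro y hy
        rw [Finset.mem_filter] at hy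
        have hGy : G y q1 := hy.2
        by_cases hyx : y ∈ xs
        · obtain ⟨i, rfl⟩ := hsurj y hyx
          refine Finset.mem_union_right _ (Finset.mem_image.mpr ⟨i, ?_, rfl⟩)
          rw [hA]
          simp [hGy]
        · have hyQ : y ∈ Q := by
            by_contra hyQ
            have hPy : ((y :: Q) ≠ [] ∧ (y :: Q).Nodup ∧ (y :: Q).IsChain G) ∧
                ∀ v ∈ y :: Q, v ∉ xs := by
              refine ⟨⟨by simp, by simp [hyQ, hQnd], ?_⟩, ?_⟩
              · rw [List.isChain_cons]
                refine ⟨?_, hQch⟩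
                intro z hz
                rw [List.head?_eq_head hQne] at hz
                simp only [Option.mem_def, Option.some_inj] at hz
                subst hz
                exact hGy
              · intro v hv
                rcases List.mem_cons.mp hv with rfl | hv
                · exact hyx
                · exact hQR v hv
            have hcon := hQmax _ hPy
            simp only [List.length_cons] at hcon
            omega
          refine Finset.mem_union_left _ (Finset.mem_erase.mpr ⟨?_, List.mem_toFinset.mpr hyQ⟩)
          rintro rfl
          exact hirr _ hGy
      have hcard := Finset.card_le_card hsub
      have h1 : ((Q.toFinset.erase q1) ∪ A.image c).card ≤ (k - 1) + A.card := by
        calc ((Q.toFinset.erase q1) ∪ A.image c).card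
            ≤ (Q.toFinset.erase q1).card + (A.image c).card := Finset.card_union_le _ _
          _ ≤ (k - 1) + A.card := by
              have e1 : (Q.toFinset.erase q1).card = k - 1 := by
                rw [Finset.card_erase_of_mem (List.mem_toFinset.mpr hq1Q),
                  List.toFinset_card_of_nodup hQnd]
              rw [e1]
              exact Nat.add_le_add_left (Finset.card_image_le) _
      have h2 := hqle q1
      omega
    -- out-degree bound at qk
    have hBbound : p + 1 ≤ k + B.card := by
      have hsub : (univ.filter fun y => G qk y) ⊆ (Q.toFinset.erase qk) ∪ B.image c := by
        intro y hy
        rw [Finset.mem_filter] at hy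
        have hGy : G qk y := hy.2
        by_cases hyx : y ∈ xs
        · obtain ⟨i, rfl⟩ := hsurj y hyx
          refine Finset.mem_union_right _ (Finset.mem_image.mpr ⟨i, ?_, rfl⟩)
          rw [hB]
          simp [hGy]
        · have hyQ : y ∈ Q := by
            by_contra hyQ
            have hPy : ((Q ++ [y]) ≠ [] ∧ (Q ++ [y]).Nodup ∧ (Q ++ [y]).IsChain G) ∧
                ∀ v ∈ Q ++ [y], v ∉ xs := by
              refine ⟨⟨by simp, by simp [List.nodup_append, hQnd, hyQ]; rintro a ha rfl; exact hyQ ha, ?_⟩, ?_⟩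
              · rw [List.isChain_append]
                refine ⟨hQch, by simp, ?_⟩
                intro u hu w hw
                rw [List.getLast?_eq_getLast hQne] at hu
                simp only [Option.mem_def, Option.some_inj, List.head?_cons] at hu hw
                subst hu; subst hw
                exact hGy
              · intro v hv
                rcases List.mem_append.mp hv with hv | hv
                · exact hQR v hv
                · simp only [List.mem_singleton] at hv
                  subst hv
                  exact hyx
            have hcon := hQmax _ hPy
            simp only [List.length_append, List.length_singleton] at hcon
            omega
          refine Finset.mem_union_left _ (Finset.mem_erase.mpr ⟨?_, List.mem_toFinset.mpr hyQ⟩)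
          rintro rfl
          exact hirr _ hGy
      have hcard := Finset.card_le_card hsub
      have h1 : ((Q.toFinset.erase qk) ∪ B.image c).card ≤ (k - 1) + B.card := by
        calc ((Q.toFinset.erase qk) ∪ B.image c).card
            ≤ (Q.toFinset.erase qk).card + (B.image c).card := Finset.card_union_le _ _
          _ ≤ (k - 1) + B.card := by
              have e1 : (Q.toFinset.erase qk).card = k - 1 := by
                rw [Finset.card_erase_of_mem (List.mem_toFinset.mpr hqkQ),
                  List.toFinset_card_of_nodup hQnd]
              rw [e1]
              exact Nat.add_le_add_left (Finset.card_image_le) _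
      have h2 := hple qk
      omega
    -- the gap condition
    have hgap : ∀ t : ℕ, 1 ≤ t → t ≤ k → ∀ b ∈ B, b - (t : ZMod l) ∉ A := by
      intro t ht1 htk b hbB haA
      have htl : t < l := by omega
      have hts : (t : ZMod l) = b - (b - (t : ZMod l)) := by ring
      have haarc : G (c (b - (t : ZMod l))) q1 := by
        rw [hA] at haA
        simpa using haA
      have hbarc : G qk (c b) := by
        rw [hB] at hbB
        simpa using hbB
      obtain ⟨ys, hys, hlen⟩ := surgery c hcinj hcadj hQne hQnd hQch hdisjQ hts ht1 htk htl
        haarc hbarc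
      have := hxmax ys hys
      omega
    have hAne : A.Nonempty := Finset.card_pos.mp (by omega)
    have hBne : B.Nonempty := Finset.card_pos.mp (by omega)
    have hcov := cover A B hAne hBne hk1 hgap
    omega

/-- Ghouila-Houri's theorem: every strongly connected digraph on n ≥ 2 vertices with
δ⁺(G) + δ⁻(G) ≥ n has a Hamilton cycle; in particular so does every digraph on n ≥ 2
vertices with minimum semidegree at least n/2. -/
theorem ghouila_houri :
    (∀ (V : Type) [Fintype V] (G : V → V → Prop),
      Irreflexive G →
      2 ≤ Fintype.card V →
      StronglyConnected G →
      Fintype.card V ≤ sInf (Set.range (outDeg G)) + sInf (Set.range (inDeg G)) →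
      ∃ f : ZMod (Fintype.card V) → V, IsHamCycle G f) ∧
    (∀ (V : Type) [Fintype V] (G : V → V → Prop),
      Irreflexive G →
      2 ≤ Fintype.card V →
      (∀ x : V, (Fintype.card V : ℝ) / 2 ≤ (outDeg G x : ℝ) ∧
        (Fintype.card V : ℝ) / 2 ≤ (inDeg G x : ℝ)) →
      ∃ f : ZMod (Fintype.card V) → V, IsHamCycle G f) := by
  constructor
  · intro V _ G hirr h2 _ hdeg
    exact core V G hirr h2 hdeg
  · intro V _ G hirr h2 hdeg
    haveI hVne : Nonempty V := Fintype.card_pos_iff.mp (by omega)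
    apply core V G hirr h2
    set a := sInf (Set.range (outDeg G)) with ha
    set b := sInf (Set.range (inDeg G)) with hb
    have hne1 : (Set.range (outDeg G)).Nonempty := ⟨_, Classical.arbitrary V, rfl⟩
    have hne2 : (Set.range (inDeg G)).Nonempty := ⟨_, Classical.arbitrary V, rfl⟩
    obtain ⟨x₀, hx₀⟩ := Nat.sInf_mem hne1
    obtain ⟨y₀, hy₀⟩ := Nat.sInf_mem hne2
    have h1 := (hdeg x₀).1
    have h2 := (hdeg y₀).2
    have hreal : (Fintype.card V : ℝ) ≤ (a : ℝ) + (b : ℝ) := by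
      rw [ha, ← hx₀, hb, ← hy₀]
      linarith
    exact_mod_cast hreal
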